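/- For any distinct i, j, k ∈ {1,2,3}, both the subgroup of A generated by {eᵢ + eⱼ, mᵢ + mⱼ, eₖ} and the subgroup generated by {eᵢ + eⱼ, mᵢ + mⱼ, mₖ} are Lagrangian subgroups of (A, ω); these are the condensation groups of the fold|e- and fold|m-boundaries, respectively. -/
import Mathlib


/-- The group of topological excitations of three copies of the 3D toric code:
pairs (a, b) of electric/magnetic labels in `(ZMod 2)³`. -/
abbrev A : Type := (Fin 3 → ZMod 2) × (Fin 3 → ZMod 2)

/-- The electric charge `eᵢ`. -/
def e (i : Fin 3) : A := (Pi.single i 1, 0)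

/-- The magnetic flux `mᵢ`. -/
def m (i : Fin 3) : A := (0, Pi.single i 1)

/-- The mutual-statistics pairing `ω((a,b),(a',b')) = a·b' + a'·b`. -/
def ω (x y : A) : ZMod 2 :=
  (∑ t, x.1 t * y.2 t) + (∑ t, y.1 t * x.2 t)

/-- The action of the S-domain wall `s⁽²⁾ᵢⱼ` on excitations:
`(a, b) ↦ (a + bⱼ•δᵢ + bᵢ•δⱼ, b)`. -/
def φ (i j : Fin 3) (x : A) : A :=
  (x.1 + x.2 j • (Pi.single i 1 : Fin 3 → ZMod 2) + x.2 i • (Pi.single j 1 : Fin 3 → ZMod 2), x.2)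

/-- A subgroup `L` of `A` is Lagrangian if it equals its orthogonal complement
with respect to the pairing `ω`. -/
def IsLagrangian (L : AddSubgroup A) : Prop :=
  (L : Set A) = {x : A | ∀ l ∈ L, ω x l = 0}

lemma tri (i j k : Fin 3) (hij : i ≠ j) (hjk : j ≠ k) (hik : i ≠ k) (f : Fin 3 → ZMod 2) :
    ∑ t, f t = f i + f j + f k := by
  have h : (Finset.univ : Finset (Fin 3)) = {i, j, k} := by
    revert hij hjk hik; fin_cases i <;> fin_cases j <;> fin_cases k <;> decide
  rw [h, Finset.sum_insert (by simp [hij, hik]), Finset.sum_insert (by simp [hjk]),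
    Finset.sum_singleton, add_assoc]

lemma covered (i j k : Fin 3) (hij : i ≠ j) (hjk : j ≠ k) (hik : i ≠ k) (t : Fin 3) :
    t = i ∨ t = j ∨ t = k := by
  revert hij hjk hik; fin_cases i <;> fin_cases j <;> fin_cases k <;> fin_cases t <;> decide

/-- Subgroup cut out by linear conditions. -/
def K (i j k : Fin 3) (s : Bool) : AddSubgroup A where
  carrier := {x | x.1 i = x.1 j ∧ x.2 i = x.2 j ∧ (if s then x.1 k else x.2 k) = 0}
  zero_mem' := by simp
  add_mem' := by
    rintro a b ⟨h1, h2, h3⟩ ⟨g1, g2, g3⟩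
    cases s <;> simp_all [Prod.add_def]
  neg_mem' := by
    rintro a ⟨h1, h2, h3⟩
    cases s <;> simp_all [Prod.fst_neg, Prod.snd_neg, Pi.neg_apply, neg_eq_iff_eq_neg]

lemma smul_closure {S : Set A} {g : A} (hg : g ∈ S) (c : ZMod 2) :
    c • g ∈ AddSubgroup.closure S := by
  have : c = 0 ∨ c = 1 := by revert c; decide
  rcases this with h | h <;> subst h
  · rw [zero_smul]; exact zero_mem _
  · simpa using AddSubgroup.subset_closure hg

lemma ω_e (x : A) (t : Fin 3) : ω x (e t) = x.2 t := by
  simp [ω, e, Pi.single_apply]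

lemma ω_m (x : A) (t : Fin 3) : ω x (m t) = x.1 t := by
  simp [ω, m, Pi.single_apply]

lemma ω_add_right (x y z : A) : ω x (y + z) = ω x y + ω x z := by
  simp [ω, Prod.add_def, mul_add, add_mul, Finset.sum_add_distrib]
  ring

lemma main (i j k : Fin 3) (hij : i ≠ j) (hjk : j ≠ k) (hik : i ≠ k) (s : Bool) :
    IsLagrangian (AddSubgroup.closure {e i + e j, m i + m j, if s then m k else e k}) := by
  set g3 : A := if s then m k else e k with hg3
  set L := AddSubgroup.closure {e i + e j, m i + m j, g3} with hL
  have hLK : L ≤ K i j k s := by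
    rw [hL, AddSubgroup.closure_le]
    rintro g (rfl | rfl | rfl)
    · refine ⟨?_, ?_, ?_⟩ <;> cases s <;>
        simp [K, e, Prod.add_def, Pi.single_apply, hij, hij.symm, hik.symm, hjk.symm]
    · refine ⟨?_, ?_, ?_⟩ <;> cases s <;>
        simp [K, m, Prod.add_def, Pi.single_apply, hij, hij.symm, hik.symm, hjk.symm]
    · cases s <;>
        simp [K, e, m, hg3, Pi.single_apply, hik.symm, hjk.symm]
  have hKL : ∀ x, x ∈ K i j k s → x ∈ L := by
    rintro x ⟨ha, hb, hc⟩
    have hx : x = x.1 i • (e i + e j) + x.2 i • (m i + m j) +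
        (if s then x.2 k else x.1 k) • g3 := by
      cases s <;>
      · refine Prod.ext (funext fun t => ?_) (funext fun t => ?_) <;>
          rcases covered i j k hij hjk hik t with rfl | rfl | rfl <;>
          simp_all [e, m, Prod.add_def, Pi.single_apply, hij, hij.symm, hik, hik.symm,
            hjk, hjk.symm]
    rw [hx]
    exact add_mem (add_mem (smul_closure (by simp) _) (smul_closure (by simp) _))
      (smul_closure (by simp) _)
  ext x
  simp only [Set.mem_setOf_eq, SetLike.mem_coe]
  constructor
  · intro hx l hl
    obtain ⟨ha, hb, hc⟩ := hLK hx
    obtain ⟨ha', hb', hc'⟩ := hLK hl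
    rw [ω, tri i j k hij hjk hik, tri i j k hij hjk hik]
    cases s <;> simp only [if_true, if_false, Bool.false_eq_true, ite_true, ite_false] at hc hc' <;>
      rw [← ha, ← hb, ← ha', ← hb'] <;>
      [rw [hc, hc']; rw [hc, hc']] <;> ring_nf <;>
      simp [show (2 : ZMod 2) = 0 from rfl]
  · intro hx
    apply hKL
    have h1 := hx _ (AddSubgroup.subset_closure (by simp) :
      (e i + e j) ∈ AddSubgroup.closure {e i + e j, m i + m j, g3})
    have h2 := hx _ (AddSubgroup.subset_closure (by simp) :
      (m i + m j) ∈ AddSubgroup.closure {e i + e j, m i + m j, g3})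
    have h3 := hx _ (AddSubgroup.subset_closure (by simp) :
      g3 ∈ AddSubgroup.closure {e i + e j, m i + m j, g3})
    rw [ω_add_right, ω_e, ω_e] at h1
    rw [ω_add_right, ω_m, ω_m] at h2
    refine ⟨?_, ?_, ?_⟩
    · have : ∀ a b : ZMod 2, a + b = 0 → a = b := by decide
      exact this _ _ h2
    · have : ∀ a b : ZMod 2, a + b = 0 → a = b := by decide
      exact this _ _ h1
    · rw [hg3] at h3
      cases s <;>
        simp only [Bool.false_eq_true, if_true, if_false, ite_true, ite_false] at h3 ⊢ <;>
        [rwa [ω_e] at h3; rwa [ω_m] at h3]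

theorem stmt_5 (i j k : Fin 3) (hij : i ≠ j) (hjk : j ≠ k) (hik : i ≠ k) :
    IsLagrangian (AddSubgroup.closure {e i + e j, m i + m j, e k}) ∧
    IsLagrangian (AddSubgroup.closure {e i + e j, m i + m j, m k}) := by
  constructor
  · simpa using main i j k hij hjk hik false
  · simpa using main i j k hij hjk hik true
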